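/- Under the No-Boundary overlay construction, for any s ∈ G_i and t ∈ G_j with i ≠ j where neither s nor t is a boundary vertex, the global shortest distance satisfies d_G(s,t) = min over b_p ∈ B_i, b_q ∈ B_j of [ d_{G_i}(s, b_p) + d_{G̃}(b_p, b_q) + d_{G_j}(b_q, t) ]. -/

import Mathlib

open scoped ENNReal Classical

namespace PSP

/-- A weighted undirected graph: symmetric adjacency and a weight function
with values in `ℝ≥0∞` (so weights are non-negative). -/
structure WGraph (V : Type*) where
  Adj : V → V → Prop
  symm : ∀ {u v}, Adj u v → Adj v u
  w : V → V → ℝ≥0∞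

variable {V : Type*} {ι : Type*}

/-- Sum of `f` over consecutive pairs of a list. -/
noncomputable def pairSum (f : V → V → ℝ≥0∞) : List V → ℝ≥0∞
  | a :: b :: rest => f a b + pairSum f (b :: rest)
  | _ => 0

/-- Weighted length of a walk (given as a list of vertices). -/
noncomputable def wlen (G : WGraph V) (l : List V) : ℝ≥0∞ := pairSum G.w l

/-- `l` is a walk in `G` from `s` to `t`: consecutive vertices are adjacent,
the first vertex is `s` and the last is `t`. -/
def IsWalk (G : WGraph V) (s t : V) (l : List V) : Prop :=
  l.Chain' G.Adj ∧ l.head? = some s ∧ l.getLast? = some t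

/-- Shortest-path distance in `G` (`⊤` if no walk exists). -/
noncomputable def dist (G : WGraph V) (s t : V) : ℝ≥0∞ :=
  sInf {x | ∃ l, IsWalk G s t l ∧ wlen G l = x}

/-- Induced subgraph on a vertex set `S`. -/
def induce (G : WGraph V) (S : Set V) : WGraph V where
  Adj u v := G.Adj u v ∧ u ∈ S ∧ v ∈ S
  symm h := ⟨G.symm h.1, h.2.2, h.2.1⟩
  w := G.w

/-- A partition of the vertex set is given by a function `P : V → ι`
assigning each vertex its partition index. The set of all boundary
vertices: vertices having a neighbor in another partition. -/
def bdry (G : WGraph V) (P : V → ι) : Set V :=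
  {v | ∃ u, G.Adj v u ∧ P u ≠ P v}

/-- Boundary vertices of partition `i`. -/
def bdryIn (G : WGraph V) (P : V → ι) (i : ι) : Set V :=
  {v | P v = i ∧ ∃ u, G.Adj v u ∧ P u ≠ i}

/-- The induced subgraph `G_i` of partition `i`. -/
def partGraph (G : WGraph V) (P : V → ι) (i : ι) : WGraph V :=
  induce G {x | P x = i}

/-- The No-Boundary overlay graph `G̃`: vertices are boundary vertices; for each
partition, each boundary pair gets an edge of weight equal to the *local*
partition distance; inter-partition edges of `G` keep their original weight. -/
noncomputable def overlay (G : WGraph V) (P : V → ι) : WGraph V where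
  Adj u v := (P u = P v ∧ u ∈ bdry G P ∧ v ∈ bdry G P) ∨ (P u ≠ P v ∧ G.Adj u v)
  symm := by
    rintro u v (⟨h1, h2, h3⟩ | ⟨h1, h2⟩)
    · exact Or.inl ⟨h1.symm, h3, h2⟩
    · exact Or.inr ⟨fun h => h1 h.symm, G.symm h2⟩
  w u v := if P u = P v then dist (partGraph G P (P u)) u v else G.w u v

/-- A half-connected boundary vertex: has a non-boundary neighbor in its own partition. -/
def halfC (G : WGraph V) (P : V → ι) (b : V) : Prop :=
  b ∈ bdry G P ∧ ∃ u, G.Adj b u ∧ P u = P b ∧ u ∉ bdry G P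

/-- A full-connected boundary vertex: all in-partition neighbors are boundary vertices. -/
def fullC (G : WGraph V) (P : V → ι) (b : V) : Prop :=
  b ∈ bdry G P ∧ ∀ u, G.Adj b u → P u = P b → u ∈ bdry G P

/-- The pruned overlay graph `G̃'`, with inserted boundary-pair weights `ω`:
edges among half-connected boundary pairs of the same partition (weight `ω`),
all inter-partition edges, and the original in-partition adjacent edges of
full-connected boundary vertices. -/
noncomputable def pruned (G : WGraph V) (P : V → ι) (ω : V → V → ℝ≥0∞) : WGraph V where
  Adj u v :=
    (P u = P v ∧ halfC G P u ∧ halfC G P v) ∨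
    (P u ≠ P v ∧ G.Adj u v) ∨
    (P u = P v ∧ G.Adj u v ∧ u ∈ bdry G P ∧ v ∈ bdry G P ∧ (fullC G P u ∨ fullC G P v))
  symm := by
    rintro u v (⟨h1, h2, h3⟩ | ⟨h1, h2⟩ | ⟨h1, h2, h3, h4, h5⟩)
    · exact Or.inl ⟨h1.symm, h3, h2⟩
    · exact Or.inr (Or.inl ⟨fun h => h1 h.symm, G.symm h2⟩)
    · exact Or.inr (Or.inr ⟨h1.symm, G.symm h2, h4, h3, h5.symm⟩)
  w u v := if P u = P v ∧ halfC G P u ∧ halfC G P v then ω u v else G.w u v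

/-- The augmented partition graph `G'_i`: the induced subgraph `G_i` plus, for each
boundary pair `b₁ b₂ ∈ B_i`, an inserted edge of weight `ω b₁ b₂` (taking the
minimum with an already-existing edge weight). -/
noncomputable def augment (G : WGraph V) (P : V → ι) (i : ι) (ω : V → V → ℝ≥0∞) : WGraph V where
  Adj u v := (G.Adj u v ∧ P u = i ∧ P v = i) ∨ (u ∈ bdryIn G P i ∧ v ∈ bdryIn G P i)
  symm := by
    rintro u v (⟨h1, h2, h3⟩ | ⟨h1, h2⟩)
    · exact Or.inl ⟨G.symm h1, h3, h2⟩
    · exact Or.inr ⟨h2, h1⟩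
  w u v :=
    if u ∈ bdryIn G P i ∧ v ∈ bdryIn G P i then
      (if G.Adj u v ∧ P u = i ∧ P v = i then min (ω u v) (G.w u v) else ω u v)
    else G.w u v

/-- Graph obtained from `G` by adding, for every pair `u v ∈ S`, a shortcut edge
of weight `dist G u v` (taking the minimum with an already-existing edge weight). -/
noncomputable def shortcut (G : WGraph V) (S : Set V) : WGraph V where
  Adj u v := G.Adj u v ∨ (u ∈ S ∧ v ∈ S)
  symm := by
    rintro u v (h | ⟨h1, h2⟩)
    · exact Or.inl (G.symm h)
    · exact Or.inr ⟨h2, h1⟩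
  w u v :=
    if u ∈ S ∧ v ∈ S then
      (if G.Adj u v then min (dist G u v) (G.w u v) else dist G u v)
    else G.w u v

/-- Vertex-splitting construction: each cut vertex `x ∈ X` keeps its neighbors in
group `N x 0`; for `1 ≤ i ≤ l x` a duplicate `(x, i)` is created, connected to the
vertices of `N x i` with the original weights and to `x` by a zero-weight edge. -/
noncomputable def split (G : WGraph V) (X : Set V) (N : V → ℕ → Set V) (l : V → ℕ) :
    WGraph (V ⊕ V × ℕ) where
  Adj a b := match a, b with
    | .inl u, .inl v => G.Adj u v ∧ (u ∈ X → v ∈ N u 0) ∧ (v ∈ X → u ∈ N v 0)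
    | .inl v, .inr (x, i) => x ∈ X ∧ 1 ≤ i ∧ i ≤ l x ∧ ((G.Adj x v ∧ v ∈ N x i) ∨ v = x)
    | .inr (x, i), .inl v => x ∈ X ∧ 1 ≤ i ∧ i ≤ l x ∧ ((G.Adj x v ∧ v ∈ N x i) ∨ v = x)
    | .inr _, .inr _ => False
  symm := by
    rintro (u | ⟨x, i⟩) (v | ⟨y, j⟩) h
    · exact ⟨G.symm h.1, h.2.2, h.2.1⟩
    · exact h
    · exact h
    · exact h.elim
  w a b := match a, b with
    | .inl u, .inl v => G.w u v
    | .inl v, .inr (x, _) => if v = x then 0 else G.w x v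
    | .inr (x, _), .inl v => if v = x then 0 else G.w x v
    | .inr _, .inr _ => 0


/-! ### Auxiliary lemmas -/

lemma pairSum_nil (f : V → V → ℝ≥0∞) : pairSum f [] = 0 := rfl

lemma pairSum_single (f : V → V → ℝ≥0∞) (a : V) : pairSum f [a] = 0 := rfl

lemma pairSum_cons_cons (f : V → V → ℝ≥0∞) (a b : V) (l : List V) :
    pairSum f (a :: b :: l) = f a b + pairSum f (b :: l) := rfl

lemma pairSum_split (f : V → V → ℝ≥0∞) :
    ∀ (l₁ : List V) (m : V) (l₂ : List V),
      pairSum f (l₁ ++ m :: l₂) = pairSum f (l₁ ++ [m]) + pairSum f (m :: l₂)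
  | [], m, l₂ => by simp [pairSum_single]
  | [a], m, l₂ => by simp [pairSum_cons_cons, pairSum_single, add_assoc]
  | a :: b :: l₁, m, l₂ => by
      simp only [List.cons_append, pairSum_cons_cons]
      have := pairSum_split f (b :: l₁) m l₂
      simp only [List.cons_append] at this
      rw [this, add_assoc]

lemma dist_le_wlen (G : WGraph V) {s t : V} {l : List V} (h : IsWalk G s t l) :
    dist G s t ≤ wlen G l := sInf_le ⟨l, h, rfl⟩

lemma walk_single (G : WGraph V) (s : V) : IsWalk G s s [s] :=
  ⟨List.isChain_singleton s, rfl, rfl⟩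

lemma dist_self (G : WGraph V) (s : V) : dist G s s = 0 := by
  refine le_antisymm ?_ zero_le
  simpa [wlen, pairSum_single] using dist_le_wlen G (walk_single G s)

lemma dist_eq_iInf (G : WGraph V) (s t : V) :
    dist G s t = ⨅ l : {l : List V // IsWalk G s t l}, wlen G l.1 := by
  rw [dist]
  have : {x | ∃ l, IsWalk G s t l ∧ wlen G l = x} = wlen G '' {l | IsWalk G s t l} := by
    ext x; simp only [Set.mem_image, Set.mem_setOf_eq]
  rw [this, sInf_image']
  rfl

lemma dist_cons (G : WGraph V) {s b : V} (h : G.Adj s b) (bp : V) :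
    dist G s bp ≤ G.w s b + dist G b bp := by
  rw [dist_eq_iInf G b bp, ENNReal.add_iInf]
  refine le_iInf fun ⟨l, hl⟩ => ?_
  obtain ⟨c, rest, rfl⟩ : ∃ c rest, l = c :: rest := by
    cases l with
    | nil => simp [IsWalk] at hl
    | cons c rest => exact ⟨c, rest, rfl⟩
  have hc : b = c := by have := hl.2.1; simp [IsWalk] at this; exact this.symm
  subst hc
  have hwalk : IsWalk G s bp (s :: b :: rest) := by
    refine ⟨List.isChain_cons_cons.2 ⟨h, hl.1⟩, rfl, ?_⟩
    rw [List.getLast?_cons_cons]; exact hl.2.2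
  simpa [wlen, pairSum_cons_cons] using dist_le_wlen G hwalk

lemma dist_mono {G H : WGraph V} (hAdj : ∀ u v, H.Adj u v → G.Adj u v)
    (hw : H.w = G.w) (s t : V) : dist G s t ≤ dist H s t := by
  refine le_sInf ?_
  rintro x ⟨l, hl, rfl⟩
  have hG : IsWalk G s t l :=
    ⟨List.IsChain.imp (fun a b h => hAdj a b h) hl.1, hl.2.1, hl.2.2⟩
  have : wlen G l = wlen H l := by rw [wlen, wlen, hw]
  rw [← this] at *
  exact dist_le_wlen G hG

lemma walk_append (G : WGraph V) {s m t : V} {l₁ l₂ : List V}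
    (h₁ : IsWalk G s m l₁) (h₂ : IsWalk G m t l₂) :
    ∃ l, IsWalk G s t l ∧ wlen G l = wlen G l₁ + wlen G l₂ := by
  obtain ⟨l₁', rfl⟩ : ∃ l', l₁ = l' ++ [m] := List.getLast?_eq_some_iff.1 h₁.2.2
  obtain ⟨c, rest, rfl⟩ : ∃ c rest, l₂ = c :: rest := by
    cases l₂ with
    | nil => simp [IsWalk] at h₂
    | cons c rest => exact ⟨c, rest, rfl⟩
  have hc : m = c := by have := h₂.2.1; simp [IsWalk] at this; exact this.symm
  subst hc
  refine ⟨l₁' ++ m :: rest, ⟨?_, ?_, ?_⟩, ?_⟩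
  · have := List.IsChain.append (l₁ := l₁' ++ [m]) (l₂ := rest) h₁.1
      (List.isChain_cons.1 h₂.1).2 ?_
    · exact (by simpa using this : List.IsChain G.Adj (l₁' ++ m :: rest))
    · intro x hx y hy
      have hx' : m = x := by
        simpa [h₁.2.2] using hx
      subst hx'
      exact (List.isChain_cons.1 h₂.1).1 y hy
  · have : l₁' ++ m :: rest = (l₁' ++ [m]) ++ rest := by simp
    rw [this, List.head?_append_of_ne_nil _ (by simp)]
    exact h₁.2.1
  · have h2 : (m :: rest).getLast? = some t := h₂.2.2
    cases rest with
    | nil => simpa using h2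
    | cons d rest' =>
      rw [List.getLast?_append_of_ne_nil _ (by simp : (m :: d :: rest') ≠ [])]
      exact h2
  · exact pairSum_split G.w l₁' m rest

lemma dist_triangle (G : WGraph V) (s m t : V) :
    dist G s t ≤ dist G s m + dist G m t := by
  rw [dist_eq_iInf G s m, dist_eq_iInf G m t, ENNReal.iInf_add]
  refine le_iInf fun ⟨l₁, hl₁⟩ => ?_
  rw [ENNReal.add_iInf]
  refine le_iInf fun ⟨l₂, hl₂⟩ => ?_
  obtain ⟨l, hl, hlen⟩ := walk_append G hl₁ hl₂
  rw [← hlen]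
  exact dist_le_wlen G hl

lemma chain'_induce (G : WGraph V) (S : Set V) :
    ∀ {l : List V}, l.Chain' G.Adj → (∀ v ∈ l, v ∈ S) → l.Chain' (induce G S).Adj
  | [], _, _ => List.isChain_nil
  | [a], _, _ => List.isChain_singleton a
  | a :: b :: rest, hc, hm => by
      rcases List.isChain_cons_cons.1 hc with ⟨hab, hc'⟩
      exact List.isChain_cons_cons.2 ⟨⟨hab, hm a (by simp), hm b (by simp)⟩,
        chain'_induce G S hc' (fun v hv => hm v (by simp [hv]))⟩

lemma bdryIn_subset_bdry (G : WGraph V) (P : V → ι) (i : ι) :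
    bdryIn G P i ⊆ bdry G P := by
  rintro v ⟨hv, u, hadj, hu⟩
  exact ⟨u, hadj, by rw [hv]; exact hu⟩

/-- Exit lemma: a walk starting in partition `i` either stays entirely in
partition `i`, or passes through a boundary vertex of partition `i`. -/
lemma exitLemma (G : WGraph V) (P : V → ι) (i : ι) :
    ∀ (l : List V) (s t : V), IsWalk G s t l → P s = i →
      (∀ v ∈ l, P v = i) ∨
      ∃ bp l₂, bp ∈ bdryIn G P i ∧ IsWalk G bp t l₂ ∧
        dist (partGraph G P i) s bp + wlen G l₂ ≤ wlen G l
  | [], s, t, hw, _ => by simp [IsWalk] at hw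
  | [a], s, t, hw, hs => by
      have ha : s = a := by have := hw.2.1; simp [IsWalk] at this; exact this.symm
      subst ha
      exact Or.inl (by simpa using hs)
  | a :: b :: rest, s, t, hw, hs => by
      have ha : s = a := by have := hw.2.1; simp [IsWalk] at this; exact this.symm
      subst ha
      rcases List.isChain_cons_cons.1 hw.1 with ⟨hadj, hc⟩
      have hwrest : IsWalk G b t (b :: rest) := by
        refine ⟨hc, rfl, ?_⟩
        have := hw.2.2
        rwa [List.getLast?_cons_cons] at this
      by_cases hb : P b = i
      · rcases exitLemma G P i (b :: rest) b t hwrest hb with hall | ⟨bp, l₂, h1, h2, h3⟩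
        · refine Or.inl ?_
          intro v hv
          rcases List.mem_cons.1 hv with rfl | hv'
          · exact hs
          · exact hall v hv'
        · refine Or.inr ⟨bp, l₂, h1, h2, ?_⟩
          have hstep : dist (partGraph G P i) s bp ≤
              G.w s b + dist (partGraph G P i) b bp := by
            have hadj' : (partGraph G P i).Adj s b := ⟨hadj, hs, hb⟩
            exact dist_cons (partGraph G P i) hadj' bp
          calc dist (partGraph G P i) s bp + wlen G l₂
              ≤ (G.w s b + dist (partGraph G P i) b bp) + wlen G l₂ :=
                add_le_add_left hstep _
            _ = G.w s b + (dist (partGraph G P i) b bp + wlen G l₂) := by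
                rw [add_assoc]
            _ ≤ G.w s b + wlen G (b :: rest) := add_le_add_right h3 _
            _ = wlen G (s :: b :: rest) := (pairSum_cons_cons G.w s b rest).symm
      · refine Or.inr ⟨s, s :: b :: rest, ⟨hs, b, hadj, hb⟩, hw, ?_⟩
        rw [dist_self, zero_add]

/-- Entry lemma: a walk ending in partition `j` either stays entirely in
partition `j`, or enters through a boundary vertex of partition `j`. -/
lemma entryLemma (G : WGraph V) (P : V → ι) (j : ι) :
    ∀ (l : List V) (s t : V), IsWalk G s t l → P t = j →
      (∀ v ∈ l, P v = j) ∨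
      ∃ bq l₁, bq ∈ bdryIn G P j ∧ IsWalk G s bq l₁ ∧
        wlen G l₁ + dist (partGraph G P j) bq t ≤ wlen G l
  | [], s, t, hw, _ => by simp [IsWalk] at hw
  | [a], s, t, hw, ht => by
      have ha : t = a := by have := hw.2.2; simp [IsWalk] at this; exact this.symm
      subst ha
      exact Or.inl (by simpa using ht)
  | a :: b :: rest, s, t, hw, ht => by
      have ha : s = a := by have := hw.2.1; simp [IsWalk] at this; exact this.symm
      subst ha
      rcases List.isChain_cons_cons.1 hw.1 with ⟨hadj, hc⟩
      have hwrest : IsWalk G b t (b :: rest) := by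
        refine ⟨hc, rfl, ?_⟩
        have := hw.2.2
        rwa [List.getLast?_cons_cons] at this
      rcases entryLemma G P j (b :: rest) b t hwrest ht with hall | ⟨bq, l₁, h1, h2, h3⟩
      · by_cases hsj : P s = j
        · refine Or.inl ?_
          intro v hv
          rcases List.mem_cons.1 hv with rfl | hv'
          · exact hsj
          · exact hall v hv'
        · have hbj : P b = j := hall b (by simp)
          refine Or.inr ⟨b, [s, b], ⟨hbj, s, G.symm hadj, hsj⟩,
            ⟨List.isChain_cons_cons.2 ⟨hadj, List.isChain_singleton b⟩, rfl, rfl⟩, ?_⟩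
          have hwalkj : IsWalk (partGraph G P j) b t (b :: rest) :=
            ⟨chain'_induce G _ hc hall, hwrest.2.1, hwrest.2.2⟩
          have hd : dist (partGraph G P j) b t ≤ wlen G (b :: rest) :=
            dist_le_wlen (partGraph G P j) hwalkj
          calc wlen G [s, b] + dist (partGraph G P j) b t
              = G.w s b + dist (partGraph G P j) b t := by
                simp [wlen, pairSum_cons_cons, pairSum_single]
            _ ≤ G.w s b + wlen G (b :: rest) := add_le_add_right hd _
            _ = wlen G (s :: b :: rest) := (pairSum_cons_cons G.w s b rest).symm
      · obtain ⟨c, rest', rfl⟩ : ∃ c rest', l₁ = c :: rest' := by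
          cases l₁ with
          | nil => simp [IsWalk] at h2
          | cons c rest' => exact ⟨c, rest', rfl⟩
        have hc' : b = c := by have := h2.2.1; simp [IsWalk] at this; exact this.symm
        subst hc'
        refine Or.inr ⟨bq, s :: b :: rest', h1,
          ⟨List.isChain_cons_cons.2 ⟨hadj, h2.1⟩, rfl, by
            rw [List.getLast?_cons_cons]; exact h2.2.2⟩, ?_⟩
        calc wlen G (s :: b :: rest') + dist (partGraph G P j) bq t
            = G.w s b + (wlen G (b :: rest') + dist (partGraph G P j) bq t) := by
              rw [wlen, pairSum_cons_cons, add_assoc]; rfl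
          _ ≤ G.w s b + wlen G (b :: rest) := add_le_add_right h3 _
          _ = wlen G (s :: b :: rest) := (pairSum_cons_cons G.w s b rest).symm

/-- cross-partition query, both endpoints non-boundary. -/
theorem stmt3 {V ι : Type*} (G : WGraph V) (P : V → ι) (i j : ι) (hij : i ≠ j)
    (hconn : ∀ u v : V, dist G u v ≠ ⊤)
    (s t : V) (hs : P s = i) (ht : P t = j)
    (hsb : s ∉ bdry G P) (htb : t ∉ bdry G P)
    (hov : ∀ b1 ∈ bdry G P, ∀ b2 ∈ bdry G P,
      dist (overlay G P) b1 b2 = dist G b1 b2) :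
    dist G s t =
      ⨅ bp ∈ bdryIn G P i, ⨅ bq ∈ bdryIn G P j,
        dist (partGraph G P i) s bp + dist (overlay G P) bp bq +
          dist (partGraph G P j) bq t := by
  refine le_antisymm ?_ ?_
  · -- dist G s t ≤ each term
    refine le_iInf₂ fun bp hbp => le_iInf₂ fun bq hbq => ?_
    rw [hov bp (bdryIn_subset_bdry G P i hbp) bq (bdryIn_subset_bdry G P j hbq)]
    have h1 : dist G s t ≤ dist G s bp + dist G bp bq + dist G bq t := by
      calc dist G s t ≤ dist G s bq + dist G bq t := dist_triangle G s bq t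
        _ ≤ (dist G s bp + dist G bp bq) + dist G bq t :=
            add_le_add_left (dist_triangle G s bp bq) _
    have h2 : dist G s bp ≤ dist (partGraph G P i) s bp :=
      dist_mono (H := partGraph G P i) (fun u v h => h.1) rfl s bp
    have h3 : dist G bq t ≤ dist (partGraph G P j) bq t :=
      dist_mono (H := partGraph G P j) (fun u v h => h.1) rfl bq t
    exact h1.trans (add_le_add (add_le_add_left h2 _) h3)
  · -- lower bound for every walk
    refine le_sInf ?_
    rintro x ⟨l, hl, rfl⟩
    rcases exitLemma G P i l s t hl hs with hall | ⟨bp, l₂, hbp, hw₂, hle₂⟩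
    · exfalso
      have ht' : t ∈ l := by
        obtain ⟨l', rfl⟩ := List.getLast?_eq_some_iff.1 hl.2.2
        simp
      exact hij ((hall t ht' ▸ ht) ▸ rfl)
    · rcases entryLemma G P j l₂ bp t hw₂ ht with hall | ⟨bq, l₁, hbq, hw₁, hle₁⟩
      · exfalso
        have hbp' : bp ∈ l₂ := List.mem_of_mem_head? (by rw [hw₂.2.1]; rfl)
        exact hij ((hall bp hbp' ▸ hbp.1) ▸ rfl)
      · have key : dist (partGraph G P i) s bp + dist (overlay G P) bp bq +
            dist (partGraph G P j) bq t ≤ wlen G l := by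
          rw [hov bp (bdryIn_subset_bdry G P i hbp) bq (bdryIn_subset_bdry G P j hbq)]
          have hGd : dist G bp bq ≤ wlen G l₁ := dist_le_wlen G hw₁
          calc dist (partGraph G P i) s bp + dist G bp bq + dist (partGraph G P j) bq t
              ≤ dist (partGraph G P i) s bp + wlen G l₁ + dist (partGraph G P j) bq t := by
                exact add_le_add_left (add_le_add_right hGd _) _
            _ = dist (partGraph G P i) s bp + (wlen G l₁ + dist (partGraph G P j) bq t) := by
                rw [add_assoc]
            _ ≤ dist (partGraph G P i) s bp + wlen G l₂ := add_le_add_right hle₁ _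
            _ ≤ wlen G l := hle₂
        calc (⨅ bp ∈ bdryIn G P i, ⨅ bq ∈ bdryIn G P j,
                dist (partGraph G P i) s bp + dist (overlay G P) bp bq +
                  dist (partGraph G P j) bq t)
            ≤ dist (partGraph G P i) s bp + dist (overlay G P) bp bq +
                dist (partGraph G P j) bq t := by
              exact iInf₂_le_of_le bp hbp (iInf₂_le bq hbq)
          _ ≤ wlen G l := key

end PSP
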